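/- Let λ > 0 and Φ(z) = λ(z + z³/3). Then the double integral ∫_{−∞}^{∞} e^{−Φ(z)} (∫_{−∞}^{z} e^{Φ(t)} dt) dz is finite and equals √(2π/λ) · ∫_0^∞ x^{−1/2} e^{−2λ(x + x³/3)} dx. -/

import Mathlib

open MeasureTheory Real Set

theorem stmt_14 (lam : ℝ) (hlam : 0 < lam) (Φ : ℝ → ℝ)
    (hΦ : ∀ z, Φ z = lam * (z + z ^ 3 / 3)) :
    MeasureTheory.Integrable
      (fun z => Real.exp (-Φ z) * ∫ t in Set.Iic z, Real.exp (Φ t)) ∧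
    (∫ z : ℝ, Real.exp (-Φ z) * ∫ t in Set.Iic z, Real.exp (Φ t))
      = Real.sqrt (2 * Real.pi / lam) *
        ∫ x in Set.Ioi (0:ℝ), x ^ (-(1:ℝ)/2) * Real.exp (-2 * lam * (x + x ^ 3 / 3)) := by
  have h2 : (0:ℝ) < 2 := two_pos
  have h2lam : (0:ℝ) < 2 * lam := by linarith
  set H : ℝ → ℝ → ℝ := fun x z =>
    2 * Real.exp (-2 * lam * (x + x ^ 3 / 3)) * Real.exp (-(2 * lam * x) * (z - x) ^ 2)
    with hHdef
  -- Step A : inner substitution t = z - 2x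
  have stepA : ∀ z : ℝ,
      Real.exp (-Φ z) * (∫ t in Set.Iic z, Real.exp (Φ t)) = ∫ x in Set.Ioi (0:ℝ), H x z := by
    intro z
    have h1 : (∫ t in Set.Iic z, Real.exp (Φ t))
        = ∫ s in Set.Ici (0:ℝ), Real.exp (Φ (z - s)) := by
      have hemb : MeasurableEmbedding (fun s : ℝ => z - s) :=
        (Homeomorph.subLeft z).measurableEmbedding
      have hmp := (Measure.measurePreserving_sub_left (volume : Measure ℝ) z).map_eq
      have hpre : (fun s : ℝ => z - s) ⁻¹' Set.Iic z = Set.Ici (0:ℝ) := by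
        ext s
        simp [sub_le_self_iff]
      calc (∫ t in Set.Iic z, Real.exp (Φ t))
          = ∫ t in Set.Iic z, Real.exp (Φ t)
              ∂(Measure.map (fun s : ℝ => z - s) volume) := by rw [hmp]
        _ = ∫ s in (fun s : ℝ => z - s) ⁻¹' Set.Iic z, Real.exp (Φ (z - s)) :=
              hemb.setIntegral_map (fun t => Real.exp (Φ t)) (Set.Iic z)
        _ = ∫ s in Set.Ici (0:ℝ), Real.exp (Φ (z - s)) := by rw [hpre]
    have h1' : (∫ s in Set.Ici (0:ℝ), Real.exp (Φ (z - s)))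
        = ∫ s in Set.Ioi (0:ℝ), Real.exp (Φ (z - s)) := integral_Ici_eq_integral_Ioi
    have h3 : (∫ x in Set.Ioi (0:ℝ), Real.exp (Φ (z - 2 * x)))
        = (2:ℝ)⁻¹ • ∫ s in Set.Ioi (2 * 0 : ℝ), Real.exp (Φ (z - s)) :=
      integral_comp_mul_left_Ioi (fun s => Real.exp (Φ (z - s))) 0 h2
    rw [mul_zero] at h3
    have h4 : (∫ s in Set.Ioi (0:ℝ), Real.exp (Φ (z - s)))
        = 2 * ∫ x in Set.Ioi (0:ℝ), Real.exp (Φ (z - 2 * x)) := by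
      rw [h3, smul_eq_mul]; ring
    rw [h1, h1', h4,
      show Real.exp (-Φ z) * (2 * ∫ x in Set.Ioi (0:ℝ), Real.exp (Φ (z - 2 * x)))
        = (Real.exp (-Φ z) * 2) * ∫ x in Set.Ioi (0:ℝ), Real.exp (Φ (z - 2 * x)) by ring,
      ← integral_const_mul]
    refine setIntegral_congr_fun measurableSet_Ioi (fun x _ => ?_)
    have expid : -Φ z + Φ (z - 2 * x)
        = -2 * lam * (x + x ^ 3 / 3) + -(2 * lam * x) * (z - x) ^ 2 := by
      rw [hΦ, hΦ]; ring
    calc Real.exp (-Φ z) * 2 * Real.exp (Φ (z - 2 * x))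
        = 2 * Real.exp (-Φ z + Φ (z - 2 * x)) := by rw [Real.exp_add]; ring
      _ = 2 * Real.exp (-2 * lam * (x + x ^ 3 / 3) + -(2 * lam * x) * (z - x) ^ 2) := by
            rw [expid]
      _ = H x z := by rw [hHdef, Real.exp_add]; ring
  -- Step B : Gaussian integral in z for fixed x > 0
  have stepBint : ∀ x : ℝ, 0 < x → Integrable (fun z => H x z) volume := by
    intro x hx
    have hb : 0 < 2 * lam * x := by positivity
    exact ((integrable_exp_neg_mul_sq hb).comp_sub_right x).const_mul _
  have stepBval : ∀ x : ℝ, 0 < x →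
      (∫ z : ℝ, H x z)
        = 2 * Real.exp (-2 * lam * (x + x ^ 3 / 3)) * Real.sqrt (π / (2 * lam * x)) := by
    intro x hx
    rw [hHdef]
    simp only []
    rw [integral_const_mul]
    congr 1
    have := integral_sub_right_eq_self (μ := volume) (fun z => Real.exp (-(2 * lam * x) * z ^ 2)) x
    rw [this, integral_gaussian]
  -- key algebraic identity
  have hkey : ∀ x : ℝ, 0 < x →
      2 * Real.sqrt (π / (2 * lam * x)) = Real.sqrt (2 * π / lam) * x ^ (-(1:ℝ)/2) := by
    intro x hx
    have hxr : x ^ (-(1:ℝ)/2) = Real.sqrt x⁻¹ := by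
      rw [show (-(1:ℝ)/2) = (-1) * (1/2) by norm_num, Real.rpow_mul hx.le,
        Real.rpow_neg_one, Real.sqrt_eq_rpow]
    have h4 : (2:ℝ) = Real.sqrt 4 := by
      rw [show (4:ℝ) = 2 ^ 2 by norm_num, Real.sqrt_sq (by norm_num : (0:ℝ) ≤ 2)]
    calc 2 * Real.sqrt (π / (2 * lam * x))
        = Real.sqrt 4 * Real.sqrt (π / (2 * lam * x)) := by rw [← h4]
      _ = Real.sqrt (4 * (π / (2 * lam * x))) := by
            rw [← Real.sqrt_mul (by norm_num : (0:ℝ) ≤ 4)]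
      _ = Real.sqrt (2 * π / lam * x⁻¹) := by
            congr 1
            field_simp
            ring
      _ = Real.sqrt (2 * π / lam) * Real.sqrt x⁻¹ :=
            Real.sqrt_mul (by positivity) _
      _ = Real.sqrt (2 * π / lam) * x ^ (-(1:ℝ)/2) := by rw [hxr]
  -- the target integrand on (0,∞) is integrable
  have hmaj : IntegrableOn
      (fun x : ℝ => x ^ (-(1:ℝ)/2) * Real.exp (-(2 * lam) * x)) (Set.Ioi (0:ℝ)) := by
    have := integrableOn_rpow_mul_exp_neg_mul_rpow
      (show (-1:ℝ) < -(1:ℝ)/2 by norm_num) (zero_lt_one) h2lam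
    refine this.congr_fun (fun x hx => ?_) measurableSet_Ioi
    simp only [Real.rpow_one]
  have hcont : ContinuousOn (fun x : ℝ => x ^ (-(1:ℝ)/2)) (Set.Ioi (0:ℝ)) := by
    intro x hx
    exact (Real.continuousAt_rpow_const x _ (Or.inl (ne_of_gt hx))).continuousWithinAt
  have hItarget : IntegrableOn
      (fun x : ℝ => x ^ (-(1:ℝ)/2) * Real.exp (-2 * lam * (x + x ^ 3 / 3)))
      (Set.Ioi (0:ℝ)) := by
    refine Integrable.mono' hmaj ?_ ?_
    · exact (hcont.mul (by fun_prop)).aestronglyMeasurable measurableSet_Ioi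
    · filter_upwards [ae_restrict_mem measurableSet_Ioi] with x hx
      have hx0 : (0:ℝ) < x := hx
      rw [Real.norm_eq_abs, abs_of_nonneg (by positivity)]
      have : Real.exp (-2 * lam * (x + x ^ 3 / 3)) ≤ Real.exp (-(2 * lam) * x) := by
        apply Real.exp_le_exp.2
        nlinarith [pow_pos hx0 3]
      exact mul_le_mul_of_nonneg_left this (Real.rpow_nonneg hx0.le _)
  -- K, the z-integral of H
  set K : ℝ → ℝ := fun x =>
    2 * Real.exp (-2 * lam * (x + x ^ 3 / 3)) * Real.sqrt (π / (2 * lam * x)) with hKdef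
  have hKeq : ∀ x ∈ Set.Ioi (0:ℝ),
      K x = Real.sqrt (2 * π / lam) *
        (x ^ (-(1:ℝ)/2) * Real.exp (-2 * lam * (x + x ^ 3 / 3))) := by
    intro x hx
    have := hkey x hx
    rw [hKdef]
    calc 2 * Real.exp (-2 * lam * (x + x ^ 3 / 3)) * Real.sqrt (π / (2 * lam * x))
        = (2 * Real.sqrt (π / (2 * lam * x))) * Real.exp (-2 * lam * (x + x ^ 3 / 3)) := by ring
      _ = (Real.sqrt (2 * π / lam) * x ^ (-(1:ℝ)/2)) * Real.exp (-2 * lam * (x + x ^ 3 / 3)) := by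
            rw [this]
      _ = _ := by ring
  have hK : IntegrableOn K (Set.Ioi (0:ℝ)) := by
    refine (IntegrableOn.congr_fun ?_ (fun x hx => (hKeq x hx).symm) measurableSet_Ioi)
    exact (hItarget.const_mul _)
  -- product integrability
  set μ : Measure ℝ := volume.restrict (Set.Ioi (0:ℝ)) with hμdef
  have hGmeas : AEStronglyMeasurable (fun p : ℝ × ℝ => H p.1 p.2) (μ.prod volume) := by
    apply Continuous.aestronglyMeasurable
    rw [hHdef]
    fun_prop
  have hGint : Integrable (fun p : ℝ × ℝ => H p.1 p.2) (μ.prod volume) := by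
    rw [integrable_prod_iff hGmeas]
    constructor
    · filter_upwards [ae_restrict_mem measurableSet_Ioi] with x hx
      exact stepBint x hx
    · have : ∀ x ∈ Set.Ioi (0:ℝ), (∫ z : ℝ, ‖H x z‖) = K x := by
        intro x hx
        have hKx : K x = 2 * Real.exp (-2 * lam * (x + x ^ 3 / 3)) *
            Real.sqrt (π / (2 * lam * x)) := rfl
        rw [hKx, ← stepBval x hx]
        congr 1
        funext z
        rw [Real.norm_eq_abs, abs_of_nonneg (by rw [hHdef]; positivity)]
      exact hK.congr_fun (fun x hx => (this x hx).symm) measurableSet_Ioi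
  refine ⟨?_, ?_⟩
  · exact hGint.integral_prod_right.congr
      (Filter.Eventually.of_forall (fun z => (stepA z).symm))
  · calc (∫ z : ℝ, Real.exp (-Φ z) * ∫ t in Set.Iic z, Real.exp (Φ t))
        = ∫ z : ℝ, ∫ x in Set.Ioi (0:ℝ), H x z :=
          integral_congr_ae (Filter.Eventually.of_forall stepA)
      _ = ∫ x in Set.Ioi (0:ℝ), ∫ z : ℝ, H x z := (integral_integral_swap hGint).symm
      _ = ∫ x in Set.Ioi (0:ℝ), K x :=
          setIntegral_congr_fun measurableSet_Ioi (fun x hx => stepBval x hx)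
      _ = ∫ x in Set.Ioi (0:ℝ), Real.sqrt (2 * π / lam) *
            (x ^ (-(1:ℝ)/2) * Real.exp (-2 * lam * (x + x ^ 3 / 3))) :=
          setIntegral_congr_fun measurableSet_Ioi hKeq
      _ = Real.sqrt (2 * Real.pi / lam) *
            ∫ x in Set.Ioi (0:ℝ), x ^ (-(1:ℝ)/2) * Real.exp (-2 * lam * (x + x ^ 3 / 3)) :=
          integral_const_mul _ _
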